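/- arXiv:1309.0367 — 4 statements merged into one kernel-verified Lean document; each statement's English description precedes it below -/
import Mathlib

section
/- Let H be a real Hilbert space with triple product {x,y,z} = (1/2)(⟨x,y⟩z + ⟨z,y⟩x). If a bounded linear map T : H → H satisfies T{x,x,x} = 2{T x, x, x} + {x, T x, x} for all x ∈ H, then T is skew-adjoint, i.e. ⟨T x, x⟩ = 0 for all x ∈ H. -/
open RealInnerProductSpace

noncomputable def tpI {H : Type*} [NormedAddCommGroup H] [InnerProductSpace ℝ H]
    (x y z : H) : H := (1/2 : ℝ) • (⟪x, y⟫ • z + ⟪z, y⟫ • x)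

theorem stmt_0 {H : Type*} [NormedAddCommGroup H] [InnerProductSpace ℝ H]
    (T : H →L[ℝ] H)
    (h : ∀ x : H, T (tpI x x x) = (2 : ℝ) • tpI (T x) x x + tpI x (T x) x) :
    ∀ x : H, ⟪T x, x⟫ = 0 := by
  intro x
  rcases eq_or_ne x 0 with rfl | hx0
  · simp
  have hx := h x
  simp only [tpI, smul_add, smul_smul, map_add, map_smul,
    real_inner_comm x (T x)] at hx
  have key : ((2 : ℝ) * ⟪x, T x⟫) • x = 0 := by
    linear_combination (norm := module) - hx
  have h2 : (2 : ℝ) * ⟪x, T x⟫ = 0 := by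
    by_contra hne
    exact hx0 (by simpa [hne] using smul_eq_zero.mp key)
  rw [real_inner_comm]; linarith
end

section
/- Let H be a real Hilbert space with the spin triple product {x,y,z} = ⟨x,y⟩z + ⟨z,y⟩x - ⟨x,z⟩y. If a bounded linear map T : H → H satisfies T{x,x,x} = 2{T x, x, x} + {x, T x, x} for all x ∈ H, then ⟨x, T x⟩ = 0 for all x ∈ H (i.e. T is skew-adjoint). -/
open RealInnerProductSpace

noncomputable def tpS {H : Type*} [NormedAddCommGroup H] [InnerProductSpace ℝ H]
    (x y z : H) : H := ⟪x, y⟫ • z + ⟪z, y⟫ • x - ⟪x, z⟫ • y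

theorem stmt_2 {H : Type*} [NormedAddCommGroup H] [InnerProductSpace ℝ H]
    (T : H →L[ℝ] H)
    (h : ∀ x : H, T (tpS x x x) = (2 : ℝ) • tpS (T x) x x + tpS x (T x) x) :
    ∀ x : H, ⟪x, T x⟫ = 0 := by
  intro x
  rcases eq_or_ne x 0 with rfl | hne
  · simp
  have hx := h x
  simp only [tpS, map_add, map_sub, map_smul] at hx
  rw [real_inner_comm x (T x)] at hx
  have key : ((2 : ℝ) * ⟪x, T x⟫) • x = 0 := by
    linear_combination (norm := module) -hx
  rcases smul_eq_zero.mp key with h0 | h0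
  · linarith
  · exact absurd h0 hne
end

section
/- Let H be a real Hilbert space with triple product {x,y,z} = (1/2)(⟨x,y⟩z + ⟨z,y⟩x). For every bounded linear T : H → H with T{x,x,x} = 2{T x,x,x} + {x,T x,x} for all x, T is a triple derivation: T{x,y,z} = {T x,y,z} + {x,T y,z} + {x,y,T z} for all x, y, z. -/
open RealInnerProductSpace

theorem stmt_10 {H : Type*} [NormedAddCommGroup H] [InnerProductSpace ℝ H]
    (T : H →L[ℝ] H)
    (h : ∀ x : H, T (tpI x x x) = (2 : ℝ) • tpI (T x) x x + tpI x (T x) x) :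
    ∀ x y z : H, T (tpI x y z) = tpI (T x) y z + tpI x (T y) z + tpI x y (T z) := by
  have hq : ∀ x : H, ⟪T x, x⟫ = 0 := by
    intro x
    rcases eq_or_ne x 0 with rfl | hx
    · simp
    · have hh := h x
      simp only [tpI, map_smul, map_add] at hh
      rw [real_inner_comm x (T x)] at hh
      have h2 : ((2 : ℝ) * ⟪x, T x⟫) • x = 0 := by
        linear_combination (norm := module) -hh
      rcases smul_eq_zero.mp h2 with h0 | h0
      · rw [real_inner_comm]; linarith [h0]
      · exact absurd h0 hx
  have hskew : ∀ a b : H, ⟪T a, b⟫ = -⟪a, T b⟫ := by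
    intro a b
    have := hq (a + b)
    simp only [map_add, inner_add_add_self, inner_add_left, inner_add_right] at this
    have ha := hq a
    have hb := hq b
    linarith [this, ha, hb, real_inner_comm b (T a), real_inner_comm a (T b),
      real_inner_comm (T a) b, real_inner_comm (T b) a]
  intro x y z
  simp only [tpI, map_smul, map_add]
  rw [hskew x y, hskew z y]
  module
end

section
/- Let H be a real Hilbert space with the spin triple product {x,y,z} = ⟨x,y⟩z + ⟨z,y⟩x - ⟨x,z⟩y. Every bounded linear T : H → H satisfying T{x,x,x} = 2{T x,x,x} + {x,T x,x} for all x is a triple derivation of the spin triple product. -/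
open RealInnerProductSpace

theorem stmt_11 {H : Type*} [NormedAddCommGroup H] [InnerProductSpace ℝ H]
    (T : H →L[ℝ] H)
    (h : ∀ x : H, T (tpS x x x) = (2 : ℝ) • tpS (T x) x x + tpS x (T x) x) :
    ∀ x y z : H, T (tpS x y z) = tpS (T x) y z + tpS x (T y) z + tpS x y (T z) := by
  have hd : ∀ x : H, ⟪x, T x⟫ = 0 := by
    intro x
    have hx := h x
    simp only [tpS, map_add, map_sub, map_smul, smul_add, smul_sub] at hx
    rw [real_inner_comm (T x) x] at hx
    have h2 : (2 * ⟪T x, x⟫) • x = 0 := by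
      linear_combination (norm := module) -hx
    rw [real_inner_comm]
    rcases eq_or_ne x 0 with h0 | h0
    · simp [h0]
    · have := (smul_eq_zero.mp h2).resolve_right h0
      linarith
  have key : ∀ u v : H, ⟪T u, v⟫ + ⟪u, T v⟫ = 0 := by
    intro u v
    have huv := hd (u + v)
    simp only [map_add, inner_add_left, inner_add_right, hd u, hd v] at huv
    have hc : ⟪T u, v⟫ = ⟪v, T u⟫ := real_inner_comm _ _
    linarith
  intro x y z
  simp only [tpS, map_add, map_sub, map_smul]
  rw [show ⟪T x, y⟫ = -⟪x, T y⟫ from by linarith [key x y],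
      show ⟪T x, z⟫ = -⟪x, T z⟫ from by linarith [key x z],
      show ⟪z, T y⟫ = -⟪T z, y⟫ from by linarith [key z y]]
  module
end
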